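/- For every integer k ≥ 1 there exist rational numbers T̃_{k,1}, …, T̃_{k,k} such that for every formal power series f ∈ ℚ⟦y⟧ one has in ℚ⟦x⟧: (1 − 24w)^{2k} · D^{k}( f(w) ) = Σ_{i=1}^{k} T̃_{k,i} · (1 − 24w)^{i} · f^{(i)}(w), where f(w) and f^{(i)}(w) denote substitution of w into f and into its i-th formal derivative, and D^k is the k-th formal derivative with respect to x. -/

import Mathlib

open PowerSeries

/-- The formal derivative `d/dx` on `ℚ⟦x⟧`. -/
noncomputable def D : PowerSeries ℚ → PowerSeries ℚ := PowerSeries.derivativeFun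

/-- Substitution of a power series `w` with zero constant term into a power series `f`:
the `n`-th coefficient of `f(w)` only depends on the truncation of `f` at order `n + 1`. -/
noncomputable def psSubst (w f : PowerSeries ℚ) : PowerSeries ℚ :=
  PowerSeries.mk fun n => PowerSeries.coeff n (Polynomial.aeval w (PowerSeries.trunc (n + 1) f))

section Aux

open Polynomial

variable {w : PowerSeries ℚ}

lemma coeff_w_pow (hw0 : constantCoeff w = 0) (n m : ℕ) (h : n < m) :
    PowerSeries.coeff n (w ^ m) = 0 := by
  have : (X : ℚ⟦X⟧) ^ m ∣ w ^ m := pow_dvd_pow_of_dvd (PowerSeries.X_dvd_iff.2 hw0) m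
  exact PowerSeries.X_pow_dvd_iff.1 this n h

lemma coeff_aeval (hw0 : constantCoeff w = 0) (p : ℚ[X]) (n : ℕ) :
    PowerSeries.coeff n (Polynomial.aeval w p) =
      PowerSeries.coeff n (Polynomial.aeval w (trunc (n + 1) (↑p : ℚ⟦X⟧))) := by
  have hsub : Polynomial.aeval w (p - trunc (n + 1) (↑p : ℚ⟦X⟧)) =
      (p - trunc (n + 1) (↑p : ℚ⟦X⟧)).sum fun j a => PowerSeries.C a * w ^ j := by
    rw [Polynomial.aeval_def, Polynomial.eval₂_eq_sum]; rfl
  have key : PowerSeries.coeff n (Polynomial.aeval w (p - trunc (n + 1) (↑p : ℚ⟦X⟧))) = 0 := by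
    rw [hsub, Polynomial.sum, map_sum]
    refine Finset.sum_eq_zero fun j hj => ?_
    by_cases hjn : j ≤ n
    · have : (p - trunc (n + 1) (↑p : ℚ⟦X⟧)).coeff j = 0 := by
        rw [Polynomial.coeff_sub, PowerSeries.coeff_trunc, if_pos (Nat.lt_succ_of_le hjn),
          Polynomial.coeff_coe, sub_self]
      rw [this, map_zero, zero_mul, map_zero]
    · rw [PowerSeries.coeff_C_mul, coeff_w_pow hw0 n j (Nat.lt_of_not_le hjn), mul_zero]
  rw [map_sub, map_sub, sub_eq_zero] at key
  exact key

lemma psSubst_coe (hw0 : constantCoeff w = 0) (p : ℚ[X]) :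
    psSubst w ↑p = Polynomial.aeval w p := by
  ext n
  rw [psSubst, PowerSeries.coeff_mk, ← coeff_aeval hw0]

lemma psSubst_stable (hw0 : constantCoeff w = 0) (f : ℚ⟦X⟧) (n m : ℕ) (h : n < m) :
    PowerSeries.coeff n (psSubst w f) =
      PowerSeries.coeff n (Polynomial.aeval w (trunc m f)) := by
  rw [psSubst, PowerSeries.coeff_mk, coeff_aeval hw0 (trunc m f) n,
    PowerSeries.trunc_trunc_of_le f h]

lemma D_mul (f g : ℚ⟦X⟧) : D (f * g) = f * D g + g * D f := by
  rw [D, PowerSeries.derivativeFun_mul, smul_eq_mul, smul_eq_mul]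

lemma D_C (a : ℚ) : D (PowerSeries.C a) = 0 := PowerSeries.derivativeFun_C

lemma D_add (f g : ℚ⟦X⟧) : D (f + g) = D f + D g := PowerSeries.derivativeFun_add f g

lemma D_pow (f : ℚ⟦X⟧) (n : ℕ) : D (f ^ (n + 1)) = (n + 1 : ℚ⟦X⟧) * f ^ n * D f := by
  induction n with
  | zero => simp [pow_one, pow_zero]
  | succ n ih =>
    rw [pow_succ, D_mul, ih]
    push_cast
    ring

lemma chain_poly (w : ℚ⟦X⟧) (p : ℚ[X]) :
    D (Polynomial.aeval w p) = Polynomial.aeval w (derivative p) * D w := by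
  induction p using Polynomial.induction_on with
  | C a =>
    have : (Polynomial.aeval w) (Polynomial.C a) = PowerSeries.C a := by simp
    simp [this, D_C]
  | add p q hp hq => rw [map_add, D_add, hp, hq, derivative_add, map_add, add_mul]
  | monomial n a ih =>
    have h1 : (Polynomial.aeval w) (Polynomial.C a * Polynomial.X ^ (n + 1)) =
        PowerSeries.C a * w ^ (n + 1) := by
      rw [map_mul, map_pow, aeval_X, aeval_C]; rfl
    have h2 : derivative (Polynomial.C a * Polynomial.X ^ (n + 1)) =
        Polynomial.C (a * (n + 1)) * Polynomial.X ^ n := by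
      rw [derivative_C_mul, derivative_X_pow]
      push_cast
      rw [← mul_assoc, ← Polynomial.C_mul]
    have h3 : (Polynomial.aeval w) (Polynomial.C (a * (n + 1)) * Polynomial.X ^ n) =
        PowerSeries.C (a * (n + 1)) * w ^ n := by
      rw [map_mul, map_pow, aeval_X, aeval_C]; rfl
    rw [h1, h2, h3, D_mul, D_C, mul_zero, add_zero, D_pow]
    have h4 : ((n : ℚ⟦X⟧) + 1) = PowerSeries.C ((n : ℚ) + 1) := by
      push_cast
      simp [map_add, map_natCast]
    rw [h4, map_mul]
    push_cast
    ring

lemma chain_rule {w : ℚ⟦X⟧} (hw0 : constantCoeff w = 0) (f : ℚ⟦X⟧) :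
    D (psSubst w f) = psSubst w (D f) * D w := by
  ext n
  set p : ℚ[X] := trunc (n + 2) f with hp
  have hL : PowerSeries.coeff n (D (psSubst w f)) =
      PowerSeries.coeff n (D (Polynomial.aeval w p)) := by
    rw [show D = ⇑(PowerSeries.derivative (R := ℚ)) from rfl, PowerSeries.coeff_derivativeFun, PowerSeries.coeff_derivativeFun,
      psSubst_stable hw0 f (n + 1) (n + 2) (by omega)]
  have hterm : ∀ i ≤ n, PowerSeries.coeff i (psSubst w (D f)) =
      PowerSeries.coeff i (Polynomial.aeval w (derivative p)) := by
    intro i hi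
    rw [psSubst, PowerSeries.coeff_mk, coeff_aeval hw0 (derivative p) i]
    congr 2
    rw [← PowerSeries.derivativeFun_coe, PowerSeries.trunc_derivativeFun,
      PowerSeries.trunc_trunc_of_le f (show i + 1 + 1 ≤ n + 2 by omega), show D = ⇑(PowerSeries.derivative (R := ℚ)) from rfl,
      PowerSeries.trunc_derivativeFun]
  have hR : PowerSeries.coeff n (psSubst w (D f) * D w) =
      PowerSeries.coeff n (Polynomial.aeval w (derivative p) * D w) := by
    rw [PowerSeries.coeff_mul, PowerSeries.coeff_mul]
    refine Finset.sum_congr rfl fun q hq => ?_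
    rw [hterm q.1 (by have := Finset.HasAntidiagonal.antidiagonal.fst_le hq; omega)]
  rw [hL, hR, chain_poly]
lemma D_eq : D = ⇑(PowerSeries.derivative (R := ℚ)) := rfl

lemma D_sum (s : Finset ℕ) (F : ℕ → ℚ⟦X⟧) : D (∑ i ∈ s, F i) = ∑ i ∈ s, D (F i) := by
  rw [D_eq]; exact map_sum (PowerSeries.derivative (R := ℚ)).toLinearMap F s

lemma D_sub (f g : ℚ⟦X⟧) : D (f - g) = D f - D g := by
  rw [D_eq]; exact map_sub (PowerSeries.derivative (R := ℚ)).toLinearMap f g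

lemma D_one : D (1 : ℚ⟦X⟧) = 0 := PowerSeries.derivativeFun_one

lemma D_X : D (X : ℚ⟦X⟧) = 1 := by
  rw [D_eq]; exact PowerSeries.derivative_X

lemma D_ofNat (n : ℕ) [n.AtLeastTwo] : D (OfNat.ofNat n : ℚ⟦X⟧) = 0 := by
  rw [show (OfNat.ofNat n : ℚ⟦X⟧) = PowerSeries.C (OfNat.ofNat n) from (map_ofNat _ n).symm]
  exact D_C _

section w
variable {w : ℚ⟦X⟧} (hw : (X : ℚ⟦X⟧) = w - 12 * w ^ 2)

lemma hu_mul_Dw (hw : (X : ℚ⟦X⟧) = w - 12 * w ^ 2) : (1 - 24 * w) * D w = 1 := by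
  have h := congrArg D hw
  rw [D_X, D_sub, D_mul, D_pow, D_ofNat] at h
  push_cast at h
  linear_combination -h

lemma hu_mul_Du (hw : (X : ℚ⟦X⟧) = w - 12 * w ^ 2) :
    (1 - 24 * w) * D (1 - 24 * w) = -24 := by
  have h1 : D (1 - 24 * w) = -24 * D w := by
    rw [D_sub, D_one, D_mul, D_ofNat]; ring
  rw [h1]
  have := hu_mul_Dw hw
  linear_combination (-24 : ℚ⟦X⟧) * this
end w

section key
variable {u : ℚ⟦X⟧}

lemma key1 (huDu : u * D u = -24) (h : ℚ⟦X⟧) (m : ℕ) :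
    u ^ 2 * D (u ^ (m + 1) * h) =
      u ^ (m + 3) * D h - 24 * ((m : ℚ⟦X⟧) + 1) * u ^ (m + 1) * h := by
  rw [D_mul, D_pow]
  have e : u ^ (m + 3) = u ^ (m + 1) * u ^ 2 := by ring
  linear_combination ((m : ℚ⟦X⟧) + 1) * u ^ (m + 1) * h * huDu

lemma key2 {d : ℚ⟦X⟧} (hu : u * d = 1) (huDu : u * D u = -24) (c : ℚ) (j : ℕ) (g g' : ℚ⟦X⟧)
    (hg : D g = g' * d) :
    u ^ 2 * D (PowerSeries.C c * u ^ (j + 1) * g) =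
      PowerSeries.C c * u ^ (j + 2) * g' -
        24 * ((j : ℚ⟦X⟧) + 1) * (PowerSeries.C c * u ^ (j + 1) * g) := by
  rw [D_mul, D_mul, D_pow, D_C, hg]
  linear_combination (PowerSeries.C c * u ^ (j + 2) * g') * hu +
    (PowerSeries.C c * ((j : ℚ⟦X⟧) + 1) * g * u ^ (j + 1)) * huDu
end key


end Aux

theorem stmt8 (w : PowerSeries ℚ) (hw0 : constantCoeff w = 0)
    (hw : (X : ℚ⟦X⟧) = w - 12 * w ^ 2) (k : ℕ) (hk : 1 ≤ k) :
    ∃ T : ℕ → ℚ,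
      ∀ f : PowerSeries ℚ,
        (1 - 24 * w) ^ (2 * k) * D^[k] (psSubst w f) =
          ∑ i ∈ Finset.Icc 1 k,
            C (T i) * (1 - 24 * w) ^ i * psSubst w (D^[i] f) := by
  set u : ℚ⟦X⟧ := 1 - 24 * w with hu_def
  have hu : u * D w = 1 := hu_mul_Dw hw
  have huDu : u * D u = -24 := hu_mul_Du hw
  have hDg : ∀ (f : ℚ⟦X⟧) (i : ℕ),
      D (psSubst w (D^[i] f)) = psSubst w (D^[i + 1] f) * D w := by
    intro f i
    rw [chain_rule hw0, Function.iterate_succ_apply']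
  suffices H : ∃ T : ℕ → ℚ, T 0 = 0 ∧ (∀ i, k < i → T i = 0) ∧
      ∀ f : ℚ⟦X⟧, u ^ (2 * k) * D^[k] (psSubst w f) =
        ∑ i ∈ Finset.Icc 1 k, PowerSeries.C (T i) * u ^ i * psSubst w (D^[i] f) by
    obtain ⟨T, _, _, hT⟩ := H
    exact ⟨T, hT⟩
  induction k, hk using Nat.le_induction with
  | base =>
    refine ⟨fun i => if i = 1 then 1 else 0, by norm_num, fun i hi => by
      simp [Nat.ne_of_gt hi], fun f => ?_⟩
    have h1 : D^[1] (psSubst w f) = psSubst w (D^[1] f) * D w := by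
      simpa using hDg f 0
    rw [h1]
    rw [Finset.Icc_self, Finset.sum_singleton]
    have hone : ((fun i => if i = 1 then (1:ℚ) else 0) 1) = 1 := rfl
    rw [hone, map_one, one_mul]
    calc u ^ (2 * 1) * (psSubst w (D^[1] f) * D w)
        = (u * psSubst w (D^[1] f)) * (u * D w) := by ring
      _ = u ^ 1 * psSubst w (D^[1] f) := by rw [hu]; ring
  | succ k hk ih =>
    obtain ⟨T, hT0, hTbig, hT⟩ := ih
    refine ⟨fun i => T (i - 1) + (48 * (k : ℚ) - 24 * i) * T i, by simp [hT0], ?_, ?_⟩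
    · intro i hi
      have h1 : T (i - 1) = 0 := hTbig _ (by omega)
      have h2 : T i = 0 := hTbig _ (by omega)
      simp only [h1, h2, mul_zero, add_zero]
    intro f
    set g : ℕ → ℚ⟦X⟧ := fun i => psSubst w (D^[i] f) with hg_def
    -- step 1: the derived identity
    have hm : 2 * k = (2 * k - 1) + 1 := by omega
    have step1 : u ^ (2 * (k + 1)) * D^[k + 1] (psSubst w f) =
        u ^ 2 * D (u ^ (2 * k) * D^[k] (psSubst w f)) +
          48 * (k : ℚ⟦X⟧) * (u ^ (2 * k) * D^[k] (psSubst w f)) := by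
      rw [hm, key1 huDu (D^[k] (psSubst w f)) (2 * k - 1)]
      rw [← Function.iterate_succ_apply' D k (psSubst w f)]
      have hc : ((2 * k - 1 : ℕ) : ℚ⟦X⟧) + 1 = 2 * (k : ℚ⟦X⟧) := by
        have h' : (2 * k - 1) + 1 = 2 * k := by omega
        calc ((2 * k - 1 : ℕ) : ℚ⟦X⟧) + 1 = (((2 * k - 1) + 1 : ℕ) : ℚ⟦X⟧) := by push_cast; ring
          _ = 2 * (k : ℚ⟦X⟧) := by rw [h']; push_cast; ring
      have he : (2 * k - 1) + 3 = 2 * (k + 1) := by omega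
      rw [hc, he]
      ring
    rw [step1, hT f, D_sum]
    -- step 2: per-term expansion
    have step2 : ∀ i ∈ Finset.Icc 1 (k + 1),
        u ^ 2 * D (PowerSeries.C (T i) * u ^ i * g i) +
          48 * (k : ℚ⟦X⟧) * (PowerSeries.C (T i) * u ^ i * g i) =
        PowerSeries.C (T i) * u ^ (i + 1) * g (i + 1) +
          PowerSeries.C ((48 * (k : ℚ) - 24 * i) * T i) * u ^ i * g i := by
      intro i hi
      obtain ⟨j, rfl⟩ : ∃ j, i = j + 1 := ⟨i - 1, by
        have := (Finset.mem_Icc.1 hi).1; omega⟩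
      rw [key2 hu huDu (T (j + 1)) j (g (j + 1)) (g (j + 2)) (hDg f (j + 1))]
      have hcast : PowerSeries.C ((48 * (k : ℚ) - 24 * (j + 1 : ℕ)) * T (j + 1)) =
          (48 * (k : ℚ⟦X⟧) - 24 * ((j : ℚ⟦X⟧) + 1)) * PowerSeries.C (T (j + 1)) := by
        rw [map_mul]
        congr 1
        rw [map_sub, map_mul, map_mul]
        simp only [map_add, map_natCast, map_ofNat, map_one]
        push_cast
        ring
      rw [hcast]
      ring
    -- use step2 on the sum (over Icc 1 k ⊆ Icc 1 (k+1))
    have hsum : u ^ 2 * (∑ i ∈ Finset.Icc 1 k, D (PowerSeries.C (T i) * u ^ i * g i)) +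
          48 * (k : ℚ⟦X⟧) * ∑ i ∈ Finset.Icc 1 k, PowerSeries.C (T i) * u ^ i * g i =
        ∑ i ∈ Finset.Icc 1 k, (PowerSeries.C (T i) * u ^ (i + 1) * g (i + 1) +
          PowerSeries.C ((48 * (k : ℚ) - 24 * i) * T i) * u ^ i * g i) := by
      rw [Finset.mul_sum, Finset.mul_sum, ← Finset.sum_add_distrib]
      refine Finset.sum_congr rfl fun i hi => ?_
      exact step2 i (Finset.mem_Icc.2 ⟨(Finset.mem_Icc.1 hi).1, by
        have := (Finset.mem_Icc.1 hi).2; omega⟩)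
    rw [hsum, Finset.sum_add_distrib]
    -- now transform the target sum
    have htarget : ∑ i ∈ Finset.Icc 1 (k + 1),
        PowerSeries.C (T (i - 1) + (48 * (k : ℚ) - 24 * i) * T i) * u ^ i * g i =
      (∑ i ∈ Finset.Icc 1 (k + 1), PowerSeries.C (T (i - 1)) * u ^ i * g i) +
        ∑ i ∈ Finset.Icc 1 (k + 1),
          PowerSeries.C ((48 * (k : ℚ) - 24 * i) * T i) * u ^ i * g i := by
      rw [← Finset.sum_add_distrib]
      refine Finset.sum_congr rfl fun i hi => ?_
      rw [map_add]; ring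
    rw [htarget]
    congr 1
    · -- reindexing part
      rw [show Finset.Icc 1 (k + 1) = Finset.map (addRightEmbedding 1) (Finset.Icc 0 k) by
        rw [Finset.map_add_right_Icc], Finset.sum_map]
      simp only [addRightEmbedding_apply, Nat.add_sub_cancel]
      refine Finset.sum_subset
        (fun x hx => Finset.mem_Icc.2 ⟨Nat.zero_le _, (Finset.mem_Icc.1 hx).2⟩)
        fun i hi hni => ?_
      have hi0 : i = 0 := by
        simp only [Finset.mem_Icc, not_and, not_le] at hi hni
        omega
      rw [hi0, hT0, map_zero, zero_mul, zero_mul]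
    · -- drop the top term
      apply Finset.sum_subset
        (fun x hx => Finset.mem_Icc.2 ⟨(Finset.mem_Icc.1 hx).1,
          Nat.le_succ_of_le (Finset.mem_Icc.1 hx).2⟩)
      intro i hi hni
      have : i = k + 1 := by
        have h1 := Finset.mem_Icc.1 hi
        simp only [Finset.mem_Icc, not_and, not_le] at hni
        omega
      rw [this, hTbig (k + 1) (by omega), mul_zero, map_zero, zero_mul, zero_mul]
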